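/- arXiv:1503.05367 — 5 statements merged into one kernel-verified Lean document; each statement's English description precedes it below -/
import Mathlib

section
/- Let x̃_1,…,x̃_K be i.i.d. Gamma(N−M+1,1) random variables (density e^{−x} x^{N−M}/(N−M)!), and let x_k be the k-th largest. Then for any fixed ε > 0, as ρ → ∞, P(x_k ≤ ε/ρ) = Θ(ρ^{−(N−M+1)(K−k+1)}); more precisely ρ^{(N−M+1)(K−k+1)} P(x_k ≤ ε/ρ) converges to (K!/((K−k)!(k−1)!(K−k+1))) · (ε^{N−M+1}/(N−M+1)!)^{K−k+1}. -/
open MeasureTheory ProbabilityTheory Real Filter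

/-- The `k`-th largest value (0-indexed: `k = 0` is the largest) among `v 0, …, v (K-1)`. -/
noncomputable def orderStatDesc {K : ℕ} (v : Fin K → ℝ) (k : ℕ) (hk : k < K) : ℝ :=
  ((List.ofFn v).insertionSort (· ≥ ·)).get ⟨k, by simpa using hk⟩

lemma sorted_get_le_iff {l : List ℝ} (hs : l.Pairwise (· ≥ ·)) {j : ℕ} (hj : j < l.length) (t : ℝ) :
    l.get ⟨j, hj⟩ ≤ t ↔ l.length - j ≤ l.countP (fun x => decide (x ≤ t)) := by
  constructor
  · intro h
    have hdrop : ∀ x ∈ l.drop j, x ≤ t := by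
      intro x hx
      obtain ⟨i, hi⟩ := List.mem_iff_get.1 hx
      have : l.get ⟨j + i.1, by have := i.2; simp [List.length_drop] at this; omega⟩ = x := by
        rw [← hi]; simp
      rw [← this]
      calc l.get ⟨j + i.1, _⟩ ≤ l.get ⟨j, hj⟩ := by
            exact hs.rel_get_of_le (by simp [Fin.le_def])
        _ ≤ t := h
    have h1 : (l.drop j).countP (fun x => decide (x ≤ t)) = (l.drop j).length := by
      rw [List.countP_eq_length]
      intro x hx; simpa using hdrop x hx
    calc l.length - j = (l.drop j).length := by simp [List.length_drop]
      _ = (l.drop j).countP _ := h1.symm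
      _ ≤ l.countP _ := by
          conv_rhs => rw [← List.take_append_drop j l]
          rw [List.countP_append]; omega
  · intro h
    by_contra hlt
    push_neg at hlt
    have htake : ∀ x ∈ l.take (j+1), ¬ (x ≤ t) := by
      intro x hx
      obtain ⟨i, hi⟩ := List.mem_iff_get.1 hx
      have hi2 : i.1 < j + 1 := by have := i.2; simp [List.length_take] at this; omega
      have hilen : i.1 < l.length := by omega
      have hgx : l.get ⟨i.1, hilen⟩ = x := by rw [← hi]; simp
      have : l.get ⟨i.1, hilen⟩ ≥ l.get ⟨j, hj⟩ :=
        hs.rel_get_of_le (by simp [Fin.le_def]; omega)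
      rw [hgx] at this
      intro hxt; exact absurd (lt_of_lt_of_le hlt this) (by linarith [hxt])
    have h0 : (l.take (j+1)).countP (fun x => decide (x ≤ t)) = 0 := by
      rw [List.countP_eq_zero]
      intro x hx; simpa using htake x hx
    have : (l.drop (j+1)).countP (fun x => decide (x ≤ t)) ≤ (l.drop (j+1)).length := List.countP_le_length
    have hsplit : l.countP (fun x => decide (x ≤ t)) =
        (l.take (j+1)).countP (fun x => decide (x ≤ t)) + (l.drop (j+1)).countP (fun x => decide (x ≤ t)) := by
      conv_lhs => rw [← List.take_append_drop (j+1) l]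
      rw [List.countP_append]
    rw [hsplit, h0] at h
    simp [List.length_drop] at this
    omega

lemma orderStatDesc_le_iff {K : ℕ} (v : Fin K → ℝ) {j : ℕ} (hj : j < K) (t : ℝ) :
    orderStatDesc v j hj ≤ t ↔
      K - j ≤ (Finset.univ.filter (fun i => v i ≤ t)).card := by
  set l := (List.ofFn v).insertionSort (· ≥ ·) with hl
  have hsort : l.Pairwise (· ≥ ·) := List.pairwise_insertionSort _ _
  have hperm : l.Perm (List.ofFn v) := List.perm_insertionSort _ _
  have hlen : l.length = K := by simp [hl]
  have hcount : l.countP (fun x => decide (x ≤ t)) =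
      (Finset.univ.filter (fun i => v i ≤ t)).card := by
    rw [hperm.countP_eq, List.ofFn_eq_map, List.countP_map, Fin.univ_def]
    simp [Finset.filter, Finset.card, Multiset.filter_coe, Multiset.coe_card,
      List.countP_eq_length_filter, Function.comp]
    rfl
  rw [orderStatDesc, sorted_get_le_iff hsort (by omega) t, hlen, hcount]

noncomputable def gamF (n : ℕ) (t : ℝ) : ℝ := ∫ x in (0:ℝ)..t, Real.exp (-x) * x ^ n / n.factorial

lemma gamF_nonneg (n : ℕ) {t : ℝ} (ht : 0 ≤ t) : 0 ≤ gamF n t := by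
  apply intervalIntegral.integral_nonneg ht
  intro x hx
  have hx0 : (0:ℝ) ≤ x := hx.1
  positivity

lemma cont_dens (n : ℕ) : Continuous (fun x : ℝ => Real.exp (-x) * x ^ n / n.factorial) := by
  continuity

lemma gamF_le (n : ℕ) {t : ℝ} (ht : 0 ≤ t) : gamF n t ≤ t ^ (n+1) / (n+1).factorial := by
  have h1 : gamF n t ≤ ∫ x in (0:ℝ)..t, x ^ n / n.factorial := by
    apply intervalIntegral.integral_mono_on ht
    · exact ((cont_dens n).intervalIntegrable _ _)
    · exact (by continuity : Continuous fun x : ℝ => x ^ n / (n.factorial:ℝ)).intervalIntegrable _ _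
    · intro x hx
      have hx0 : 0 ≤ x := hx.1
      have key : Real.exp (-x) * x ^ n ≤ x ^ n := by
        calc Real.exp (-x) * x ^ n ≤ 1 * x ^ n := by
              apply mul_le_mul_of_nonneg_right _ (by positivity)
              rw [Real.exp_le_one_iff]; linarith
          _ = x ^ n := one_mul _
      exact (div_le_div_iff_of_pos_right (by positivity)).2 key
  have h2 : (∫ x in (0:ℝ)..t, x ^ n / n.factorial) = t ^ (n+1) / (n+1).factorial := by
    rw [intervalIntegral.integral_div, integral_pow, Nat.factorial_succ,
      zero_pow (Nat.succ_ne_zero n)]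
    push_cast
    field_simp
    try ring
    try tauto
  linarith

lemma gamF_ge (n : ℕ) {t : ℝ} (ht : 0 ≤ t) :
    Real.exp (-t) * t ^ (n+1) / (n+1).factorial ≤ gamF n t := by
  have h1 : (∫ x in (0:ℝ)..t, Real.exp (-t) * x ^ n / n.factorial) ≤ gamF n t := by
    apply intervalIntegral.integral_mono_on ht
    · exact (by continuity : Continuous fun x : ℝ => Real.exp (-t) * x ^ n / (n.factorial:ℝ)).intervalIntegrable _ _
    · exact ((cont_dens n).intervalIntegrable _ _)
    · intro x hx
      have hx0 : 0 ≤ x := hx.1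
      have key : Real.exp (-t) * x ^ n ≤ Real.exp (-x) * x ^ n := by
        apply mul_le_mul_of_nonneg_right _ (by positivity)
        exact Real.exp_le_exp.2 (by linarith [hx.2])
      exact (div_le_div_iff_of_pos_right (by positivity)).2 key
  have h2 : (∫ x in (0:ℝ)..t, Real.exp (-t) * x ^ n / n.factorial)
      = Real.exp (-t) * t ^ (n+1) / (n+1).factorial := by
    have : (fun x : ℝ => Real.exp (-t) * x ^ n / n.factorial)
        = fun x : ℝ => (Real.exp (-t) / n.factorial) * x ^ n := by
      funext x; ring
    rw [this, intervalIntegral.integral_const_mul, integral_pow, Nat.factorial_succ,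
      zero_pow (Nat.succ_ne_zero n)]
    push_cast
    field_simp
    try ring
    try tauto
  linarith

lemma cdf_eq (n : ℕ) {t : ℝ} (ht : 0 ≤ t) :
    (volume.withDensity (fun x => Set.indicator (Set.Ici (0 : ℝ))
      (fun x => ENNReal.ofReal (Real.exp (-x) * x ^ n / n.factorial)) x)) (Set.Iic t)
    = ENNReal.ofReal (gamF n t) := by
  rw [withDensity_apply _ measurableSet_Iic]
  rw [lintegral_indicator measurableSet_Ici _, Measure.restrict_restrict measurableSet_Ici]
  have hset : Set.Ici (0:ℝ) ∩ Set.Iic t = Set.Icc 0 t := by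
    ext x; simp [Set.mem_Icc, and_comm]
  rw [hset]
  have hint : IntegrableOn (fun x : ℝ => Real.exp (-x) * x ^ n / n.factorial) (Set.Icc 0 t) :=
    (cont_dens n).integrableOn_Icc
  rw [← MeasureTheory.ofReal_integral_eq_lintegral_ofReal hint
    ((ae_restrict_iff' measurableSet_Icc).2 (Filter.Eventually.of_forall fun x hx => by
      have hx0 : (0:ℝ) ≤ x := hx.1
      positivity))]
  congr 1
  rw [gamF, intervalIntegral.integral_of_le ht, MeasureTheory.integral_Icc_eq_integral_Ioc]

lemma bonferroni_lower {Ω ι : Type*} [MeasurableSpace Ω] [DecidableEq ι] (μ : Measure Ω)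
    (s : Finset ι) (A : ι → Set Ω) (hA : ∀ i, MeasurableSet (A i)) :
    ∑ i ∈ s, μ (A i) ≤ μ (⋃ i ∈ s, A i) + ∑ p ∈ s.offDiag, μ (A p.1 ∩ A p.2) := by
  induction s using Finset.induction_on with
  | empty => simp
  | @insert a s ha ih =>
    rw [Finset.sum_insert ha]
    have hsub : ({a} ×ˢ s) ∪ s.offDiag ⊆ (insert a s).offDiag := by
      intro p hp
      rcases Finset.mem_union.1 hp with h | h
      · rcases Finset.mem_product.1 h with ⟨h1, h2⟩
        simp only [Finset.mem_singleton] at h1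
        rw [Finset.mem_offDiag]
        refine ⟨by simp [h1], by simp [Finset.mem_insert, h2], ?_⟩
        intro hpp; rw [← hpp, h1] at h2; exact ha h2
      · rw [Finset.mem_offDiag] at h ⊢
        exact ⟨Finset.mem_insert_of_mem h.1, Finset.mem_insert_of_mem h.2.1, h.2.2⟩
    have hdisj : Disjoint ({a} ×ˢ s) s.offDiag := by
      rw [Finset.disjoint_left]
      intro p hp hp'
      rcases Finset.mem_product.1 hp with ⟨h1, _⟩
      simp only [Finset.mem_singleton] at h1
      have := (Finset.mem_offDiag.1 hp').1
      rw [h1] at this; exact ha this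
    have hsum : ∑ p ∈ ({a} ×ˢ s) ∪ s.offDiag, μ (A p.1 ∩ A p.2)
        ≤ ∑ p ∈ (insert a s).offDiag, μ (A p.1 ∩ A p.2) :=
      Finset.sum_le_sum_of_subset hsub
    rw [Finset.sum_union hdisj, Finset.sum_product, Finset.sum_singleton] at hsum
    have key : μ (A a) + μ (⋃ i ∈ s, A i)
        ≤ μ (⋃ i ∈ insert a s, A i) + ∑ i ∈ s, μ (A a ∩ A i) := by
      have h1 : μ (A a) + μ (⋃ i ∈ s, A i)
          = μ (A a ∪ ⋃ i ∈ s, A i) + μ (A a ∩ ⋃ i ∈ s, A i) :=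
        (measure_union_add_inter _ (MeasurableSet.biUnion s.countable_toSet
          (fun i _ => hA i))).symm
      have h2 : μ (A a ∩ ⋃ i ∈ s, A i) ≤ ∑ i ∈ s, μ (A a ∩ A i) := by
        rw [Set.inter_iUnion₂]
        exact (measure_biUnion_finset_le s _)
      rw [h1, Finset.set_biUnion_insert]
      exact add_le_add le_rfl h2
    calc μ (A a) + ∑ i ∈ s, μ (A i)
        ≤ μ (A a) + (μ (⋃ i ∈ s, A i) + ∑ p ∈ s.offDiag, μ (A p.1 ∩ A p.2)) :=
          add_le_add le_rfl ih
      _ = (μ (A a) + μ (⋃ i ∈ s, A i)) + ∑ p ∈ s.offDiag, μ (A p.1 ∩ A p.2) := by ring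
      _ ≤ (μ (⋃ i ∈ insert a s, A i) + ∑ i ∈ s, μ (A a ∩ A i))
            + ∑ p ∈ s.offDiag, μ (A p.1 ∩ A p.2) := add_le_add key le_rfl
      _ = μ (⋃ i ∈ insert a s, A i)
            + (∑ i ∈ s, μ (A a ∩ A i) + ∑ p ∈ s.offDiag, μ (A p.1 ∩ A p.2)) := by ring
      _ ≤ μ (⋃ i ∈ insert a s, A i) + ∑ p ∈ (insert a s).offDiag, μ (A p.1 ∩ A p.2) :=
          add_le_add le_rfl hsum

lemma event_decomp {Ω : Type*} {K m : ℕ} (X : Fin K → Ω → ℝ) (t : ℝ) :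
    {ω | m ≤ (Finset.univ.filter (fun i => X i ω ≤ t)).card}
      = ⋃ S ∈ Finset.powersetCard m (Finset.univ : Finset (Fin K)),
          ⋂ i ∈ S, X i ⁻¹' Set.Iic t := by
  ext ω
  simp only [Set.mem_setOf_eq, Set.mem_iUnion, Set.mem_iInter, Finset.mem_powersetCard,
    Set.mem_preimage, Set.mem_Iic]
  constructor
  · intro h
    obtain ⟨S, hS, hcard⟩ := Finset.exists_subset_card_eq h
    exact ⟨S, ⟨Finset.subset_univ S, hcard⟩, fun i hi => (Finset.mem_filter.1 (hS hi)).2⟩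
  · rintro ⟨S, ⟨-, hcard⟩, hall⟩
    calc m = S.card := hcard.symm
      _ ≤ (Finset.univ.filter (fun i => X i ω ≤ t)).card := by
          apply Finset.card_le_card
          intro i hi
          exact Finset.mem_filter.2 ⟨Finset.mem_univ i, hall i hi⟩
lemma prob_sandwich {Ω : Type*} [MeasurableSpace Ω] (P : Measure Ω) [IsProbabilityMeasure P]
    (n K m : ℕ) (hm1 : 1 ≤ m) (hmK : m ≤ K)
    (X : Fin K → Ω → ℝ) (hXmeas : ∀ i, Measurable (X i))
    (hiid : iIndepFun X P)
    (hdens : ∀ i, P.map (X i) = volume.withDensity (fun x =>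
        Set.indicator (Set.Ici (0 : ℝ))
          (fun x => ENNReal.ofReal (Real.exp (-x) * x ^ n / n.factorial)) x))
    {t : ℝ} (ht : 0 ≤ t) :
    (Nat.choose K m : ℝ) * (gamF n t) ^ m
        - (Nat.choose K m : ℝ)^2 * (gamF n t) ^ (m+1)
      ≤ (P {ω | m ≤ (Finset.univ.filter (fun i => X i ω ≤ t)).card}).toReal
    ∧ (P {ω | m ≤ (Finset.univ.filter (fun i => X i ω ≤ t)).card}).toReal
      ≤ (Nat.choose K m : ℝ) * (gamF n t) ^ m := by
  have hK1 : 1 ≤ K := le_trans hm1 hmK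
  set F := gamF n t with hFdef
  have hF0 : 0 ≤ F := gamF_nonneg n ht
  have hGt : ∀ i : Fin K, P (X i ⁻¹' Set.Iic t) = ENNReal.ofReal F := by
    intro i
    rw [← Measure.map_apply (hXmeas i) measurableSet_Iic, hdens i, cdf_eq n ht]
  have hF1 : F ≤ 1 := by
    have : P (X ⟨0, by omega⟩ ⁻¹' Set.Iic t) ≤ 1 := prob_le_one
    rw [hGt ⟨0, by omega⟩] at this
    exact ENNReal.ofReal_le_one.1 this
  have hcap : ∀ S : Finset (Fin K),
      P (⋂ i ∈ S, X i ⁻¹' Set.Iic t) = ENNReal.ofReal (F ^ S.card) := by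
    intro S
    rw [hiid.measure_inter_preimage_eq_mul S (fun i _ => measurableSet_Iic)]
    rw [Finset.prod_congr rfl (fun i _ => hGt i), Finset.prod_const,
      ENNReal.ofReal_pow hF0]
  have hseteq : {ω | m ≤ (Finset.univ.filter (fun i => X i ω ≤ t)).card}
      = ⋃ S ∈ Finset.powersetCard m (Finset.univ : Finset (Fin K)),
          ⋂ i ∈ S, X i ⁻¹' Set.Iic t := event_decomp X t
  set 𝒮 := Finset.powersetCard m (Finset.univ : Finset (Fin K)) with h𝒮
  have hcard𝒮 : 𝒮.card = Nat.choose K m := by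
    simp [h𝒮, Finset.card_powersetCard]
  have hScard : ∀ S ∈ 𝒮, S.card = m := fun S hS => (Finset.mem_powersetCard.1 hS).2
  have hAmeas : ∀ S : Finset (Fin K), MeasurableSet (⋂ i ∈ S, X i ⁻¹' Set.Iic t) :=
    fun S => MeasurableSet.biInter S.countable_toSet
      (fun i _ => (hXmeas i) measurableSet_Iic)
  -- upper bound
  have hub : P {ω | m ≤ (Finset.univ.filter (fun i => X i ω ≤ t)).card}
      ≤ ENNReal.ofReal ((Nat.choose K m : ℝ) * F ^ m) := by
    rw [hseteq]
    calc P (⋃ S ∈ 𝒮, ⋂ i ∈ S, X i ⁻¹' Set.Iic t)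
        ≤ ∑ S ∈ 𝒮, P (⋂ i ∈ S, X i ⁻¹' Set.Iic t) := measure_biUnion_finset_le 𝒮 _
      _ = ∑ S ∈ 𝒮, ENNReal.ofReal (F ^ m) := by
          apply Finset.sum_congr rfl
          intro S hS; rw [hcap S, hScard S hS]
      _ = 𝒮.card * ENNReal.ofReal (F ^ m) := by
          rw [Finset.sum_const, nsmul_eq_mul]
      _ = ENNReal.ofReal ((Nat.choose K m : ℝ) * F ^ m) := by
          rw [hcard𝒮, ENNReal.ofReal_mul (by positivity), ENNReal.ofReal_natCast]
  -- lower bound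
  have hlb : ENNReal.ofReal ((Nat.choose K m : ℝ) * F ^ m)
      ≤ P {ω | m ≤ (Finset.univ.filter (fun i => X i ω ≤ t)).card}
        + ENNReal.ofReal ((Nat.choose K m : ℝ)^2 * F ^ (m+1)) := by
    rw [hseteq]
    have hbon := bonferroni_lower P 𝒮 (fun S => ⋂ i ∈ S, X i ⁻¹' Set.Iic t) hAmeas
    have hsum1 : ∑ S ∈ 𝒮, P (⋂ i ∈ S, X i ⁻¹' Set.Iic t)
        = ENNReal.ofReal ((Nat.choose K m : ℝ) * F ^ m) := by
      calc ∑ S ∈ 𝒮, P (⋂ i ∈ S, X i ⁻¹' Set.Iic t)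
          = ∑ S ∈ 𝒮, ENNReal.ofReal (F ^ m) := by
            apply Finset.sum_congr rfl
            intro S hS; rw [hcap S, hScard S hS]
        _ = 𝒮.card * ENNReal.ofReal (F ^ m) := by rw [Finset.sum_const, nsmul_eq_mul]
        _ = ENNReal.ofReal ((Nat.choose K m : ℝ) * F ^ m) := by
            rw [hcard𝒮, ENNReal.ofReal_mul (by positivity), ENNReal.ofReal_natCast]
    have hsum2 : ∑ p ∈ 𝒮.offDiag,
        P ((⋂ i ∈ p.1, X i ⁻¹' Set.Iic t) ∩ ⋂ i ∈ p.2, X i ⁻¹' Set.Iic t)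
        ≤ ENNReal.ofReal ((Nat.choose K m : ℝ)^2 * F ^ (m+1)) := by
      have hterm : ∀ p ∈ 𝒮.offDiag,
          P ((⋂ i ∈ p.1, X i ⁻¹' Set.Iic t) ∩ ⋂ i ∈ p.2, X i ⁻¹' Set.Iic t)
          ≤ ENNReal.ofReal (F ^ (m+1)) := by
        rintro ⟨S, T⟩ hp
        rw [Finset.mem_offDiag] at hp
        obtain ⟨hS, hT, hST⟩ := hp
        have hinter : (⋂ i ∈ S, X i ⁻¹' Set.Iic t) ∩ ⋂ i ∈ T, X i ⁻¹' Set.Iic t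
            = ⋂ i ∈ S ∪ T, X i ⁻¹' Set.Iic t := by
          ext x
          simp only [Set.mem_inter_iff, Set.mem_iInter, Finset.mem_union]
          constructor
          · rintro ⟨h1, h2⟩ i hi
            rcases hi with h | h
            · exact h1 i h
            · exact h2 i h
          · intro h
            exact ⟨fun i hi => h i (Or.inl hi), fun i hi => h i (Or.inr hi)⟩
        have hcardST : m + 1 ≤ (S ∪ T).card := by
          by_contra hcon
          push_neg at hcon
          have h1 : S ⊆ S ∪ T := Finset.subset_union_left
          have h2 : S.card = m := hScard S hS
          have h3 : T.card = m := hScard T hT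
          have h4 : T ⊆ S ∪ T := Finset.subset_union_right
          have : S = S ∪ T := Finset.eq_of_subset_of_card_le h1 (by omega)
          have hTsub : T ⊆ S := by rw [this]; exact h4
          exact hST (Finset.eq_of_subset_of_card_le hTsub (by omega)).symm
        rw [hinter, hcap]
        rw [ENNReal.ofReal_le_ofReal_iff (by positivity)]
        exact pow_le_pow_of_le_one hF0 hF1 hcardST
      calc ∑ p ∈ 𝒮.offDiag, P ((⋂ i ∈ p.1, X i ⁻¹' Set.Iic t) ∩ ⋂ i ∈ p.2, X i ⁻¹' Set.Iic t)
          ≤ ∑ _p ∈ 𝒮.offDiag, ENNReal.ofReal (F ^ (m+1)) := Finset.sum_le_sum hterm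
        _ = 𝒮.offDiag.card * ENNReal.ofReal (F ^ (m+1)) := by
            rw [Finset.sum_const, nsmul_eq_mul]
        _ ≤ ((Nat.choose K m : ℕ)^2 : ℕ) * ENNReal.ofReal (F ^ (m+1)) := by
            apply mul_le_mul_left
            have hh : 𝒮.offDiag.card ≤ (Nat.choose K m)^2 := by
              rw [Finset.offDiag_card, hcard𝒮, pow_two]
              omega
            exact_mod_cast hh
        _ = ENNReal.ofReal ((Nat.choose K m : ℝ)^2 * F ^ (m+1)) := by
            rw [ENNReal.ofReal_mul (by positivity)]
            congr 1
            rw [← ENNReal.ofReal_natCast]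
            congr 1
            push_cast
            ring
    calc ENNReal.ofReal ((Nat.choose K m : ℝ) * F ^ m)
        = ∑ S ∈ 𝒮, P (⋂ i ∈ S, X i ⁻¹' Set.Iic t) := hsum1.symm
      _ ≤ P (⋃ S ∈ 𝒮, ⋂ i ∈ S, X i ⁻¹' Set.Iic t) + ∑ p ∈ 𝒮.offDiag,
            P ((⋂ i ∈ p.1, X i ⁻¹' Set.Iic t) ∩ ⋂ i ∈ p.2, X i ⁻¹' Set.Iic t) := hbon
      _ ≤ _ := add_le_add le_rfl hsum2
  constructor
  · have h1 := ENNReal.toReal_mono (by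
      exact ENNReal.add_ne_top.2 ⟨measure_ne_top P _, ENNReal.ofReal_ne_top⟩) hlb
    rw [ENNReal.toReal_ofReal (by positivity),
      ENNReal.toReal_add (measure_ne_top P _) ENNReal.ofReal_ne_top,
      ENNReal.toReal_ofReal (by positivity)] at h1
    linarith
  · exact ENNReal.toReal_le_of_le_ofReal (by positivity) hub
/-- If `x̃_1, …, x̃_K` are i.i.d. `Gamma(N-M+1, 1)` (density `e^{-x} x^{N-M}/(N-M)!`) and `x_k`
is the `k`-th largest, then for fixed `ε > 0`, as `ρ → ∞`,
`ρ^{(N-M+1)(K-k+1)} · P(x_k ≤ ε/ρ) →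
  (K!/((K-k)!(k-1)!(K-k+1))) · (ε^{N-M+1}/(N-M+1)!)^{K-k+1}`. -/
theorem diversity_order_of_kth_largest_gamma
    {Ω : Type*} [MeasurableSpace Ω] (P : Measure Ω) [IsProbabilityMeasure P]
    (N M K k : ℕ) (hM : 1 ≤ M) (hNM : M ≤ N) (hk1 : 1 ≤ k) (hkK : k ≤ K)
    (X : Fin K → Ω → ℝ) (hXmeas : ∀ i, Measurable (X i))
    (hiid : iIndepFun X P)
    (hdens : ∀ i, P.map (X i) = volume.withDensity (fun x =>
        Set.indicator (Set.Ici (0 : ℝ))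
          (fun x => ENNReal.ofReal (Real.exp (-x) * x ^ (N - M) / (N - M).factorial)) x))
    (ε : ℝ) (hε : 0 < ε) :
    Filter.Tendsto
      (fun ρ : ℝ => ρ ^ ((N - M + 1) * (K - k + 1))
        * (P {ω | orderStatDesc (fun i => X i ω) (k - 1) (by omega) ≤ ε / ρ}).toReal)
      Filter.atTop
      (nhds ((K.factorial : ℝ)
          / ((K - k).factorial * (k - 1).factorial * (K - k + 1))
        * (ε ^ (N - M + 1) / (N - M + 1).factorial) ^ (K - k + 1))) := by
  set n := N - M with hn
  set m := K - k + 1 with hm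
  have hm1 : 1 ≤ m := by omega
  have hmK : m ≤ K := by omega
  set c : ℝ := (Nat.choose K m : ℝ) with hc
  set L : ℝ := ε ^ (n+1) / (n+1).factorial with hL
  have hL0 : 0 < L := by positivity
  -- rewrite the event
  have hset : ∀ ρ : ℝ, {ω | orderStatDesc (fun i => X i ω) (k - 1) (by omega) ≤ ε / ρ}
      = {ω | m ≤ (Finset.univ.filter (fun i => X i ω ≤ ε / ρ)).card} := by
    intro ρ
    ext ω
    simp only [Set.mem_setOf_eq]
    rw [orderStatDesc_le_iff]
    have : K - (k - 1) = m := by omega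
    rw [this]
  -- the sandwich, for each ρ > 0
  have hsand : ∀ ρ : ℝ, 0 < ρ →
      c * (gamF n (ε/ρ)) ^ m - c^2 * (gamF n (ε/ρ)) ^ (m+1)
        ≤ (P {ω | m ≤ (Finset.univ.filter (fun i => X i ω ≤ ε/ρ)).card}).toReal
      ∧ (P {ω | m ≤ (Finset.univ.filter (fun i => X i ω ≤ ε/ρ)).card}).toReal
        ≤ c * (gamF n (ε/ρ)) ^ m := by
    intro ρ hρ
    exact prob_sandwich P n K m hm1 hmK X hXmeas hiid hdens (by positivity)
  -- limit of u ρ = ρ^(n+1) * gamF n (ε/ρ)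
  have hdiv0 : Filter.Tendsto (fun ρ : ℝ => ε / ρ) Filter.atTop (nhds 0) :=
    tendsto_const_nhds.div_atTop Filter.tendsto_id
  have hubound : ∀ ρ : ℝ, 0 < ρ → ρ ^ (n+1) * gamF n (ε/ρ) ≤ L := by
    intro ρ hρ
    have h1 := gamF_le n (t := ε/ρ) (by positivity)
    calc ρ ^ (n+1) * gamF n (ε/ρ) ≤ ρ ^ (n+1) * ((ε/ρ) ^ (n+1) / (n+1).factorial) := by
          apply mul_le_mul_of_nonneg_left h1 (by positivity)
      _ = (ρ * (ε/ρ)) ^ (n+1) / (n+1).factorial := by rw [mul_pow]; ring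
      _ = L := by rw [mul_div_cancel₀ _ (ne_of_gt hρ)]
  have hlbound : ∀ ρ : ℝ, 0 < ρ →
      Real.exp (-(ε/ρ)) * L ≤ ρ ^ (n+1) * gamF n (ε/ρ) := by
    intro ρ hρ
    have h1 := gamF_ge n (t := ε/ρ) (by positivity)
    have hpow : ρ ^ (n+1) * (ε/ρ)^(n+1) = ε ^ (n+1) := by
      rw [← mul_pow, mul_div_cancel₀ _ (ne_of_gt hρ)]
    calc Real.exp (-(ε/ρ)) * L
        = Real.exp (-(ε/ρ)) * ((ρ ^ (n+1) * (ε/ρ)^(n+1)) / (n+1).factorial) := by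
          rw [hL, hpow]
      _ = ρ ^ (n+1) * (Real.exp (-(ε/ρ)) * (ε/ρ) ^ (n+1) / (n+1).factorial) := by ring
      _ ≤ ρ ^ (n+1) * gamF n (ε/ρ) := mul_le_mul_of_nonneg_left h1 (by positivity)
  have hexp1 : Filter.Tendsto (fun ρ : ℝ => Real.exp (-(ε/ρ)) * L) Filter.atTop (nhds L) := by
    have h1 : Filter.Tendsto (fun ρ : ℝ => Real.exp (-(ε/ρ))) Filter.atTop (nhds 1) := by
      have h0 : Filter.Tendsto (fun ρ : ℝ => -(ε/ρ)) Filter.atTop (nhds 0) := by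
        simpa using hdiv0.neg
      have := (Real.continuous_exp.tendsto 0).comp h0
      simpa [Function.comp_def] using this
    simpa using h1.mul_const L
  have hu : Filter.Tendsto (fun ρ : ℝ => ρ ^ (n+1) * gamF n (ε/ρ)) Filter.atTop (nhds L) := by
    apply tendsto_of_tendsto_of_tendsto_of_le_of_le' hexp1 tendsto_const_nhds
    · filter_upwards [Filter.eventually_gt_atTop (0:ℝ)] with ρ hρ using hlbound ρ hρ
    · filter_upwards [Filter.eventually_gt_atTop (0:ℝ)] with ρ hρ using hubound ρ hρ
  have hF0lim : Filter.Tendsto (fun ρ : ℝ => gamF n (ε/ρ)) Filter.atTop (nhds 0) := by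
    have h2 : Filter.Tendsto (fun ρ : ℝ => (ε/ρ) ^ (n+1) / ((n+1).factorial : ℝ))
        Filter.atTop (nhds 0) := by
      have := (hdiv0.pow (n+1)).div_const ((n+1).factorial : ℝ)
      simpa using this
    apply tendsto_of_tendsto_of_tendsto_of_le_of_le' tendsto_const_nhds h2
    · filter_upwards [Filter.eventually_gt_atTop (0:ℝ)] with ρ hρ using
        gamF_nonneg n (by positivity)
    · filter_upwards [Filter.eventually_gt_atTop (0:ℝ)] with ρ hρ using
        gamF_le n (t := ε/ρ) (by positivity)
  -- combine
  have hlower : Filter.Tendsto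
      (fun ρ : ℝ => c * (ρ ^ (n+1) * gamF n (ε/ρ))^m
        - c^2 * (ρ ^ (n+1) * gamF n (ε/ρ))^m * gamF n (ε/ρ)) Filter.atTop (nhds (c * L^m)) := by
    have := ((hu.pow m).const_mul c).sub
      ((((hu.pow m).const_mul (c^2)).mul hF0lim))
    simpa using this
  have hupper : Filter.Tendsto (fun ρ : ℝ => c * (ρ ^ (n+1) * gamF n (ε/ρ))^m)
      Filter.atTop (nhds (c * L^m)) := (hu.pow m).const_mul c
  have hmain : Filter.Tendsto
      (fun ρ : ℝ => ρ ^ ((n + 1) * m)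
        * (P {ω | m ≤ (Finset.univ.filter (fun i => X i ω ≤ ε/ρ)).card}).toReal)
      Filter.atTop (nhds (c * L^m)) := by
    apply tendsto_of_tendsto_of_tendsto_of_le_of_le' hlower hupper
    · filter_upwards [Filter.eventually_gt_atTop (0:ℝ)] with ρ hρ
      have h := (hsand ρ hρ).1
      have hpow : ρ ^ ((n+1) * m) = (ρ ^ (n+1))^m := by rw [pow_mul]
      have hρpos : (0:ℝ) < ρ ^ ((n+1)*m) := by positivity
      have h2 := mul_le_mul_of_nonneg_left h (le_of_lt hρpos)
      calc c * (ρ ^ (n+1) * gamF n (ε/ρ))^m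
            - c^2 * (ρ ^ (n+1) * gamF n (ε/ρ))^m * gamF n (ε/ρ)
          = ρ ^ ((n+1)*m) * (c * (gamF n (ε/ρ))^m - c^2 * (gamF n (ε/ρ))^(m+1)) := by
            rw [hpow, mul_pow]; ring
        _ ≤ _ := h2
    · filter_upwards [Filter.eventually_gt_atTop (0:ℝ)] with ρ hρ
      have h := (hsand ρ hρ).2
      have hpow : ρ ^ ((n+1) * m) = (ρ ^ (n+1))^m := by rw [pow_mul]
      have hρpos : (0:ℝ) ≤ ρ ^ ((n+1)*m) := by positivity
      have h2 := mul_le_mul_of_nonneg_left h hρpos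
      calc ρ ^ ((n+1)*m)
            * (P {ω | m ≤ (Finset.univ.filter (fun i => X i ω ≤ ε/ρ)).card}).toReal
          ≤ ρ ^ ((n+1)*m) * (c * (gamF n (ε/ρ))^m) := h2
        _ = c * (ρ ^ (n+1) * gamF n (ε/ρ))^m := by rw [hpow, mul_pow]; ring
  -- identify the constant
  have hconst : c * L^m = (K.factorial : ℝ)
      / ((K - k).factorial * (k - 1).factorial * (K - k + 1))
      * (ε ^ (n + 1) / ((n + 1).factorial : ℝ)) ^ m := by
    have hc1 : Nat.choose K m * (m.factorial * (K - m).factorial) = K.factorial := by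
      rw [← mul_assoc]
      exact Nat.choose_mul_factorial_mul_factorial hmK
    have hKm : K - m = k - 1 := by omega
    have hmfac : m.factorial = (K - k + 1) * (K - k).factorial := by
      rw [hm]; exact Nat.factorial_succ (K - k)
    have hnat : Nat.choose K m * ((K - k).factorial * ((k - 1).factorial * (K - k + 1)))
        = K.factorial := by
      rw [hKm, hmfac] at hc1
      rw [← hc1]; ring
    have hcast := congrArg (fun x : ℕ => (x : ℝ)) hnat
    push_cast [Nat.cast_sub hkK] at hcast
    have f1 : (0:ℝ) < (K - k).factorial := by exact_mod_cast Nat.factorial_pos _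
    have f2 : (0:ℝ) < (k - 1).factorial := by exact_mod_cast Nat.factorial_pos _
    have f3 : (0:ℝ) < (K:ℝ) - (k:ℝ) + 1 := by
      have : (k:ℝ) ≤ K := by exact_mod_cast hkK
      linarith
    have hck : (k:ℝ) ≤ (K:ℝ) := by exact_mod_cast hkK
    have hceq : c = (K.factorial : ℝ)
        / ((K - k).factorial * (k - 1).factorial * (K - k + 1)) := by
      rw [hc, eq_div_iff (by
        apply ne_of_gt
        have : (0:ℝ) < ((K - k).factorial : ℝ) * ((k - 1).factorial : ℝ) := mul_pos f1 f2
        nlinarith)]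
      push_cast [Nat.cast_sub hkK]
      linear_combination hcast
    rw [hceq, hL]
  rw [← hconst]
  exact hmain.congr fun ρ => by rw [hset ρ]
end

section
/- Let X₂ be the second largest of K i.i.d. Exponential(1) random variables (K ≥ 2). Then for any φ > 0, E[log₂(1 + φX₂)] = (1/ln 2)[ K Σ_{p=1}^{K−1} C(K−1,p)(−1)^p e^{p/φ} Ei(−p/φ) − (K−1) Σ_{l=1}^{K} C(K,l)(−1)^l e^{l/φ} Ei(−l/φ) ]. -/
open MeasureTheory Real Filter

/-- `EiNeg y = Ei(-y) = -∫_y^∞ e^{-t}/t dt` for `y > 0`, the exponential integral. -/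
noncomputable def EiNeg (y : ℝ) : ℝ := -∫ t in Set.Ioi y, Real.exp (-t) / t

set_option maxHeartbeats 1000000 in
lemma term_integrable {c : ℝ} (hc : 0 < c) :
    IntegrableOn (fun t : ℝ => Real.exp (-(c * (Real.exp (Real.log 2 * t) - 1)))) (Set.Ioi 0) := by
  have hlog2 : 0 < Real.log 2 := Real.log_pos (by norm_num)
  have hb : 0 < c * Real.log 2 := mul_pos hc hlog2
  refine Integrable.mono (exp_neg_integrableOn_Ioi 0 hb) ?_ ?_
  · have : Continuous fun t : ℝ => Real.exp (-(c * (Real.exp (Real.log 2 * t) - 1))) := by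
      fun_prop
    exact this.aestronglyMeasurable.restrict
  · filter_upwards [ae_restrict_mem measurableSet_Ioi] with t ht
    rw [Real.norm_eq_abs, Real.norm_eq_abs, abs_of_pos (Real.exp_pos _), abs_of_pos (Real.exp_pos _)]
    apply Real.exp_le_exp.2
    have h1 : 1 + Real.log 2 * t ≤ Real.exp (Real.log 2 * t) := by
      have := Real.add_one_le_exp (Real.log 2 * t); linarith
    have := mul_le_mul_of_nonneg_left h1 hc.le
    nlinarith

set_option maxHeartbeats 1000000 in
lemma term_integral {c : ℝ} (hc : 0 < c) :
    ∫ t in Set.Ioi (0:ℝ), Real.exp (-(c * (Real.exp (Real.log 2 * t) - 1)))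
      = -(Real.exp c * EiNeg c) / Real.log 2 := by
  have hlog2 : 0 < Real.log 2 := Real.log_pos (by norm_num)
  have himg : (fun t : ℝ => c * Real.exp (Real.log 2 * t)) '' Set.Ioi 0 = Set.Ioi c := by
    ext u
    constructor
    · rintro ⟨t, ht, rfl⟩
      have : 1 < Real.exp (Real.log 2 * t) := by
        rw [← Real.exp_zero]
        exact Real.exp_lt_exp.2 (mul_pos hlog2 ht)
      simpa using (lt_mul_of_one_lt_right hc this)
    · intro hu
      have huc : 1 < u / c := (one_lt_div hc).2 hu
      refine ⟨Real.log (u / c) / Real.log 2, div_pos (Real.log_pos huc) hlog2, ?_⟩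
      show c * Real.exp (Real.log 2 * (Real.log (u / c) / Real.log 2)) = u
      rw [mul_div_cancel₀ _ hlog2.ne', Real.exp_log (by positivity),
        mul_div_cancel₀ _ hc.ne']
  have hderiv : ∀ t ∈ Set.Ioi (0:ℝ),
      HasDerivWithinAt (fun t : ℝ => c * Real.exp (Real.log 2 * t))
        (|c * Real.log 2 * Real.exp (Real.log 2 * t)|) (Set.Ioi 0) t := by
    intro t _
    have h1 := (((hasDerivAt_id t).const_mul (Real.log 2)).exp).const_mul c
    simp only [id_eq, mul_one] at h1
    have : |c * Real.log 2 * Real.exp (Real.log 2 * t)|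
        = c * (Real.exp (Real.log 2 * t) * Real.log 2) := by
      rw [abs_of_pos (by positivity)]; ring
    rw [this]
    exact h1.hasDerivWithinAt
  have hinj : Set.InjOn (fun t : ℝ => c * Real.exp (Real.log 2 * t)) (Set.Ioi 0) := by
    intro a _ b _ h
    have h2 := mul_left_cancel₀ hc.ne' h
    have h3 := Real.exp_injective h2
    exact mul_left_cancel₀ hlog2.ne' h3
  have key := integral_image_eq_integral_abs_deriv_smul measurableSet_Ioi hderiv hinj
    (fun u => Real.exp (-u) / u)
  rw [himg] at key
  have hrw : ∀ t ∈ Set.Ioi (0:ℝ),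
      |(|c * Real.log 2 * Real.exp (Real.log 2 * t)|)| •
          (Real.exp (-(c * Real.exp (Real.log 2 * t))) / (c * Real.exp (Real.log 2 * t)))
        = Real.log 2 * Real.exp (-(c * Real.exp (Real.log 2 * t))) := by
    intro t _
    rw [abs_abs, abs_of_pos (by positivity), smul_eq_mul]
    field_simp
  rw [setIntegral_congr_fun measurableSet_Ioi hrw, integral_const_mul] at key
  have hEi : ∫ u in Set.Ioi c, Real.exp (-u) / u = -EiNeg c := by
    simp [EiNeg]
  have hJ : ∫ t in Set.Ioi (0:ℝ), Real.exp (-(c * Real.exp (Real.log 2 * t)))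
      = -EiNeg c / Real.log 2 := by
    rw [← hEi, key]; field_simp
  have hsplit : ∀ t : ℝ, Real.exp (-(c * (Real.exp (Real.log 2 * t) - 1)))
      = Real.exp c * Real.exp (-(c * Real.exp (Real.log 2 * t))) := by
    intro t; rw [← Real.exp_add]; ring_nf
  simp_rw [hsplit]
  rw [integral_const_mul, hJ]
  ring

lemma binom_aux (y : ℝ) (n : ℕ) :
    (1 - y) ^ n = 1 + ∑ p ∈ Finset.Icc 1 n, (n.choose p : ℝ) * (-1) ^ p * y ^ p := by
  have h := add_pow (-y) 1 n
  simp only [one_pow, mul_one] at h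
  have h2 : (1 : ℝ) - y = -y + 1 := by ring
  rw [h2, h, Finset.sum_range_succ']
  simp only [pow_zero, Nat.choose_zero_right, Nat.cast_one, one_mul]
  rw [add_comm]
  congr 1
  have : Finset.Icc 1 n = Finset.Ico 1 (n+1) := by ext x; simp
  rw [this, Finset.sum_Ico_eq_sum_range]
  simp only [Nat.add_sub_cancel]
  refine Finset.sum_congr rfl fun i _ => ?_
  rw [add_comm 1 i, neg_pow]
  ring


set_option maxHeartbeats 2000000 in
/-- If `X₂` is the second largest of `K ≥ 2` i.i.d. `Exponential(1)` random variables
(CDF `F(x) = K(1-e^{-x})^{K-1} - (K-1)(1-e^{-x})^K` for `x ≥ 0`), then for `φ > 0`,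
`E[log₂(1+φX₂)] = (1/ln 2)[K Σ_{p=1}^{K-1} C(K-1,p)(-1)^p e^{p/φ} Ei(-p/φ)
                 - (K-1) Σ_{l=1}^K C(K,l)(-1)^l e^{l/φ} Ei(-l/φ)]`. -/
theorem expected_logb_of_second_largest_of_exponentials
    {Ω : Type*} [MeasurableSpace Ω] (P : Measure Ω) [IsProbabilityMeasure P]
    (K : ℕ) (hK : 2 ≤ K)
    (X : Ω → ℝ) (hXmeas : Measurable X)
    (hcdf : ∀ x : ℝ, (P {ω | X ω ≤ x}).toReal
      = if 0 ≤ x then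
          (K : ℝ) * (1 - Real.exp (-x)) ^ (K - 1)
            - ((K : ℝ) - 1) * (1 - Real.exp (-x)) ^ K
        else 0)
    (φ : ℝ) (hφ : 0 < φ)
    (hint : Integrable (fun ω => Real.logb 2 (1 + φ * X ω)) P) :
    ∫ ω, Real.logb 2 (1 + φ * X ω) ∂P
      = (1 / Real.log 2) *
          ((K : ℝ) * ∑ p ∈ Finset.Icc 1 (K - 1),
              ((K - 1).choose p : ℝ) * (-1) ^ p * Real.exp (p / φ) * EiNeg (p / φ)
            - ((K : ℝ) - 1) * ∑ l ∈ Finset.Icc 1 K,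
              (K.choose l : ℝ) * (-1) ^ l * Real.exp (l / φ) * EiNeg (l / φ)) := by
  have hlog2 : 0 < Real.log 2 := Real.log_pos (by norm_num)
  -- X is a.e. nonnegative
  have hXnull : P {ω | X ω < 0} = 0 := by
    have hsub : {ω | X ω < 0} ⊆ ⋃ n : ℕ, {ω | X ω ≤ -(1 / (n + 1))} := by
      intro ω hω
      simp only [Set.mem_setOf_eq] at hω
      obtain ⟨n, hn⟩ := exists_nat_one_div_lt (neg_pos.2 hω)
      exact Set.mem_iUnion.2 ⟨n, by simp only [Set.mem_setOf_eq]; push_cast; linarith⟩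
    refine measure_mono_null hsub (measure_iUnion_null fun n => ?_)
    have h := hcdf (-(1 / (n + 1)))
    rw [if_neg (by rw [not_le]; have h0 : (0:ℝ) < 1 / ((n:ℝ) + 1) := by positivity
                   linarith)] at h
    exact (ENNReal.toReal_eq_zero_iff _).1 h |>.resolve_right (measure_ne_top P _)
  have hX0 : ∀ᵐ ω ∂P, 0 ≤ X ω := by
    rw [ae_iff]
    simpa only [not_le] using hXnull
  have hY0 : 0 ≤ᵐ[P] fun ω => Real.logb 2 (1 + φ * X ω) := by
    filter_upwards [hX0] with ω h
    exact Real.logb_nonneg one_lt_two (by nlinarith)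
  rw [hint.integral_eq_integral_meas_lt hY0]
  -- the tail probability
  set s : ℝ → ℝ := fun t => (Real.exp (Real.log 2 * t) - 1) / φ with hs
  have htail : ∀ t ∈ Set.Ioi (0:ℝ),
      (P {a | t < Real.logb 2 (1 + φ * X a)}).toReal
        = -(K:ℝ) * ∑ p ∈ Finset.Icc 1 (K - 1), ((K - 1).choose p : ℝ) * (-1) ^ p *
              Real.exp (-((p:ℝ)/φ * (Real.exp (Real.log 2 * t) - 1)))
          + ((K:ℝ) - 1) * ∑ l ∈ Finset.Icc 1 K, (K.choose l : ℝ) * (-1) ^ l *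
              Real.exp (-((l:ℝ)/φ * (Real.exp (Real.log 2 * t) - 1))) := by
    intro t ht
    have hE1 : 1 ≤ Real.exp (Real.log 2 * t) := by
      rw [← Real.exp_zero]
      exact Real.exp_le_exp.2 (mul_nonneg hlog2.le (le_of_lt (Set.mem_Ioi.1 ht)))
    have hst : 0 ≤ s t := div_nonneg (by linarith) hφ.le
    have hsetEq : {a | t < Real.logb 2 (1 + φ * X a)} =ᵐ[P] ({ω | X ω ≤ s t} : Set Ω)ᶜ := by
      refine Filter.eventuallyEq_set.2 ?_
      filter_upwards [hX0] with ω h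
      have hx : (0:ℝ) < 1 + φ * X ω := by nlinarith
      show t < Real.logb 2 (1 + φ * X ω) ↔ ¬ X ω ≤ s t
      rw [not_le, Real.lt_logb_iff_rpow_lt one_lt_two hx,
        Real.rpow_def_of_pos (by norm_num : (0:ℝ) < 2)]
      show _ ↔ (Real.exp (Real.log 2 * t) - 1) / φ < X ω
      rw [div_lt_iff₀ hφ]
      constructor <;> intro h' <;> nlinarith
    have hms : MeasurableSet {ω | X ω ≤ s t} := hXmeas measurableSet_Iic
    rw [measure_congr hsetEq]
    show (P ({ω | X ω ≤ s t}ᶜ : Set Ω)).toReal = _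
    rw [prob_compl_eq_one_sub hms,
      ENNReal.toReal_sub_of_le prob_le_one ENNReal.one_ne_top, ENNReal.toReal_one,
      hcdf (s t), if_pos hst, binom_aux, binom_aux]
    have hy : ∀ n : ℕ, Real.exp (-(s t)) ^ n
        = Real.exp (-((n:ℝ)/φ * (Real.exp (Real.log 2 * t) - 1))) := by
      intro n
      rw [← Real.exp_nat_mul]
      congr 1
      show (n:ℝ) * -((Real.exp (Real.log 2 * t) - 1) / φ) = _
      field_simp
    simp_rw [hy]
    ring
  simp only [measureReal_def]
  rw [setIntegral_congr_fun measurableSet_Ioi htail]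
  -- integrate term by term
  have hIpos : ∀ n : ℕ, 1 ≤ n → (0:ℝ) < (n:ℝ)/φ := by
    intro n hn
    have : (1:ℝ) ≤ (n:ℝ) := by exact_mod_cast hn
    positivity
  have hI1 : ∀ p ∈ Finset.Icc 1 (K-1), IntegrableOn
      (fun t => ((K - 1).choose p : ℝ) * (-1) ^ p *
        Real.exp (-((p:ℝ)/φ * (Real.exp (Real.log 2 * t) - 1)))) (Set.Ioi 0) := by
    intro p hp
    exact (term_integrable (hIpos p (Finset.mem_Icc.1 hp).1)).const_mul _
  have hI2 : ∀ l ∈ Finset.Icc 1 K, IntegrableOn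
      (fun t => (K.choose l : ℝ) * (-1) ^ l *
        Real.exp (-((l:ℝ)/φ * (Real.exp (Real.log 2 * t) - 1)))) (Set.Ioi 0) := by
    intro l hl
    exact (term_integrable (hIpos l (Finset.mem_Icc.1 hl).1)).const_mul _
  have hS1 : IntegrableOn (fun t => ∑ p ∈ Finset.Icc 1 (K-1),
      ((K - 1).choose p : ℝ) * (-1) ^ p *
        Real.exp (-((p:ℝ)/φ * (Real.exp (Real.log 2 * t) - 1)))) (Set.Ioi 0) :=
    integrable_finset_sum _ hI1
  have hS2 : IntegrableOn (fun t => ∑ l ∈ Finset.Icc 1 K,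
      (K.choose l : ℝ) * (-1) ^ l *
        Real.exp (-((l:ℝ)/φ * (Real.exp (Real.log 2 * t) - 1)))) (Set.Ioi 0) :=
    integrable_finset_sum _ hI2
  rw [integral_add (hS1.const_mul _) (hS2.const_mul _), integral_const_mul, integral_const_mul,
    integral_finset_sum _ hI1, integral_finset_sum _ hI2]
  have e1 : ∑ p ∈ Finset.Icc 1 (K-1), (∫ t in Set.Ioi (0:ℝ),
      ((K - 1).choose p : ℝ) * (-1) ^ p *
        Real.exp (-((p:ℝ)/φ * (Real.exp (Real.log 2 * t) - 1))))
      = -(1/Real.log 2) * ∑ p ∈ Finset.Icc 1 (K-1),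
          ((K - 1).choose p : ℝ) * (-1) ^ p * Real.exp (p / φ) * EiNeg (p / φ) := by
    rw [Finset.mul_sum]
    refine Finset.sum_congr rfl fun p hp => ?_
    rw [integral_const_mul, term_integral (hIpos p (Finset.mem_Icc.1 hp).1)]
    ring
  have e2 : ∑ l ∈ Finset.Icc 1 K, (∫ t in Set.Ioi (0:ℝ),
      (K.choose l : ℝ) * (-1) ^ l *
        Real.exp (-((l:ℝ)/φ * (Real.exp (Real.log 2 * t) - 1))))
      = -(1/Real.log 2) * ∑ l ∈ Finset.Icc 1 K,
          (K.choose l : ℝ) * (-1) ^ l * Real.exp (l / φ) * EiNeg (l / φ) := by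
    rw [Finset.mul_sum]
    refine Finset.sum_congr rfl fun l hl => ?_
    rw [integral_const_mul, term_integral (hIpos l (Finset.mem_Icc.1 hl).1)]
    ring
  rw [e1, e2]
  ring
end

section
/- The function ϖ(k) = Σ_{l=1}^{k} C(k,l) (−1)^l log₂ l is monotonically increasing in k for k ≥ 2; equivalently ϖ(k+1) ≥ ϖ(k) for all k ≥ 2. -/
open Real Finset

noncomputable def Ffun (k : ℕ) (x : ℝ) : ℝ :=
  ∑ j ∈ Finset.range (k+1), (-1:ℝ)^j * (k.choose j) * Real.log (x + j)

noncomputable def Gfun (k : ℕ) (x : ℝ) : ℝ :=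
  ∑ j ∈ Finset.range (k+1), (-1:ℝ)^j * (k.choose j) * (x + j)⁻¹

noncomputable def Pfun (k : ℕ) (x : ℝ) : ℝ :=
  ∏ j ∈ Finset.range (k+1), (x + j)

lemma diff_rec (f : ℕ → ℝ) (k : ℕ) :
    ∑ j ∈ Finset.range (k+2), (-1:ℝ)^j * ((k+1).choose j) * f j
      = (∑ j ∈ Finset.range (k+1), (-1:ℝ)^j * (k.choose j) * f j)
        - ∑ j ∈ Finset.range (k+1), (-1:ℝ)^j * (k.choose j) * f (j+1) := by
  have hB : ∑ j ∈ Finset.range (k+1), (-1:ℝ)^j * (k.choose (j+1)) * f (j+1)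
      = ∑ j ∈ Finset.range k, (-1:ℝ)^j * (k.choose (j+1)) * f (j+1) := by
    rw [Finset.sum_range_succ]
    simp
  have hsplit : ∀ j ∈ Finset.range (k+1),
      (-1:ℝ)^(j+1) * (((k+1).choose (j+1)):ℝ) * f (j+1)
        = (-((-1:ℝ)^j * (k.choose j) * f (j+1)))
          + (-((-1:ℝ)^j * (k.choose (j+1)) * f (j+1))) := by
    intro j _
    rw [Nat.choose_succ_succ]
    push_cast
    ring
  rw [Finset.sum_range_succ' (fun j => (-1:ℝ)^j * (((k+1).choose j):ℝ) * f j) (k+1),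
      Finset.sum_range_succ' (fun j => (-1:ℝ)^j * ((k.choose j):ℝ) * f j) k,
      Finset.sum_congr rfl hsplit, Finset.sum_add_distrib, Finset.sum_neg_distrib,
      Finset.sum_neg_distrib, hB]
  have hsplit2 : ∀ j ∈ Finset.range k,
      (-1:ℝ)^(j+1) * ((k.choose (j+1)):ℝ) * f (j+1)
        = -((-1:ℝ)^j * (k.choose (j+1)) * f (j+1)) := by
    intro j _; ring
  rw [Finset.sum_congr rfl hsplit2, Finset.sum_neg_distrib]
  simp
  ring

lemma Grec (k : ℕ) (x : ℝ) : Gfun (k+1) x = Gfun k x - Gfun k (x+1) := by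
  have h := diff_rec (fun j => (x + j)⁻¹) k
  simp only [Gfun]
  rw [show k+1+1 = k+2 from rfl, h]
  congr 1
  apply Finset.sum_congr rfl
  intro j _
  push_cast
  ring_nf

lemma Frec (k : ℕ) (x : ℝ) : Ffun (k+1) x = Ffun k x - Ffun k (x+1) := by
  have h := diff_rec (fun j => Real.log (x + j)) k
  simp only [Ffun]
  rw [show k+1+1 = k+2 from rfl, h]
  congr 1
  apply Finset.sum_congr rfl
  intro j _
  push_cast
  ring_nf

lemma Ppos (k : ℕ) {x : ℝ} (hx : 0 < x) : 0 < Pfun k x := by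
  apply Finset.prod_pos
  intro j _
  positivity

lemma Pfun_succ (k : ℕ) (x : ℝ) : Pfun (k+1) x = Pfun k x * (x + (k+1)) := by
  simp [Pfun, Finset.prod_range_succ]

lemma Pfun_shift (k : ℕ) (x : ℝ) : Pfun (k+1) x = Pfun k (x+1) * x := by
  simp only [Pfun]
  rw [Finset.prod_range_succ' (fun j => (x + (j:ℝ)))]
  simp only [Nat.cast_zero, add_zero]
  congr 1
  apply Finset.prod_congr rfl
  intro j _
  push_cast
  ring

lemma Gclosed (k : ℕ) : ∀ x : ℝ, 0 < x → Gfun k x * Pfun k x = (k.factorial : ℝ) := by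
  induction k with
  | zero =>
      intro x hx
      simp [Gfun, Pfun, inv_mul_cancel₀ (ne_of_gt hx)]
  | succ k ih =>
      intro x hx
      have h1 := ih x hx
      have h2 := ih (x+1) (by linarith)
      rw [Grec, sub_mul]
      have e1 : Gfun k x * Pfun (k+1) x = (k.factorial : ℝ) * (x + (k+1)) := by
        rw [Pfun_succ, ← mul_assoc, h1]
      have e2 : Gfun k (x+1) * Pfun (k+1) x = (k.factorial : ℝ) * x := by
        rw [Pfun_shift, ← mul_assoc, h2]
      rw [e1, e2]
      push_cast [Nat.factorial_succ]
      ring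

lemma Gpos (k : ℕ) {x : ℝ} (hx : 0 < x) : 0 < Gfun k x := by
  have h := Gclosed k x hx
  have hp := Ppos k hx
  have hf : (0:ℝ) < (k.factorial : ℝ) := by positivity
  nlinarith

lemma FhasDeriv (k : ℕ) {x : ℝ} (hx : 0 < x) : HasDerivAt (Ffun k) (Gfun k x) x := by
  have : HasDerivAt (fun y => ∑ j ∈ Finset.range (k+1), (-1:ℝ)^j * (k.choose j) * Real.log (y + j))
      (∑ j ∈ Finset.range (k+1), (-1:ℝ)^j * (k.choose j) * (x + j)⁻¹) x := by
    apply HasDerivAt.fun_sum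
    intro j _
    have hj : x + (j:ℝ) ≠ 0 := by positivity
    have h1 : HasDerivAt (fun y : ℝ => y + (j:ℝ)) 1 x := (hasDerivAt_id x).add_const _
    have h2 : HasDerivAt (fun y : ℝ => Real.log (y + j)) (1 / (x + j)) x := h1.log hj
    simpa [one_div] using h2.const_mul ((-1:ℝ)^j * (k.choose j))
  exact this

lemma Fmono (k : ℕ) : StrictMonoOn (Ffun k) (Set.Icc (1:ℝ) 2) := by
  apply strictMonoOn_of_deriv_pos (convex_Icc 1 2)
  · intro x hx
    exact ((FhasDeriv k (by linarith [hx.1] : (0:ℝ) < x)).differentiableAt).continuousAt.continuousWithinAt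
  · intro x hx
    rw [interior_Icc] at hx
    rw [(FhasDeriv k (by linarith [hx.1] : (0:ℝ) < x)).deriv]
    exact Gpos k (by linarith [hx.1])

lemma Fneg (k : ℕ) : Ffun (k+1) 1 < 0 := by
  have h := Fmono k (Set.mem_Icc.mpr ⟨le_refl 1, by norm_num⟩)
      (Set.mem_Icc.mpr ⟨by norm_num, le_refl 2⟩) (by norm_num)
  have := Frec k 1
  norm_num at this
  linarith [this]

lemma icc_to_range (n : ℕ) (f : ℕ → ℝ) : ∑ i ∈ Finset.Icc 1 n, f i = ∑ i ∈ Finset.range n, f (1 + i) := by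
  rw [← Finset.Ico_add_one_right_eq_Icc, Finset.sum_Ico_eq_sum_range]
  simp

/-- `ϖ(k) = Σ_{l=1}^k C(k,l) (-1)^l log₂ l` is monotonically increasing for `k ≥ 2`. -/
theorem varpi_monotone (k : ℕ) (hk : 2 ≤ k) :
    (∑ l ∈ Finset.Icc 1 k, (k.choose l : ℝ) * (-1) ^ l * Real.logb 2 l)
      ≤ ∑ l ∈ Finset.Icc 1 (k + 1), ((k + 1).choose l : ℝ) * (-1) ^ l * Real.logb 2 l := by
  have hlog : (0:ℝ) < Real.log 2 := Real.log_pos (by norm_num)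
  have hF : Ffun k 1 < 0 := by
    obtain ⟨m, rfl⟩ : ∃ m, k = m + 1 := ⟨k - 1, by omega⟩
    exact Fneg m
  rw [icc_to_range k (fun l => (k.choose l : ℝ) * (-1) ^ l * Real.logb 2 l),
      icc_to_range (k+1) (fun l => ((k+1).choose l : ℝ) * (-1) ^ l * Real.logb 2 l)]
  have hextend : ∑ i ∈ Finset.range k, (k.choose (1+i) : ℝ) * (-1)^(1+i) * Real.logb 2 (↑(1+i))
      = ∑ i ∈ Finset.range (k+1), (k.choose (1+i) : ℝ) * (-1)^(1+i) * Real.logb 2 (↑(1+i)) := by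
    rw [Finset.sum_range_succ]
    have : k.choose (1+k) = 0 := Nat.choose_eq_zero_of_lt (by omega)
    simp [this]
  rw [hextend]
  have hsplit : ∀ i ∈ Finset.range (k+1),
      ((k+1).choose (1+i) : ℝ) * (-1)^(1+i) * Real.logb 2 (↑(1+i))
        = (k.choose (1+i) : ℝ) * (-1)^(1+i) * Real.logb 2 (↑(1+i))
          + (-((-1:ℝ)^i * (k.choose i) * Real.logb 2 (↑(1+i)))) := by
    intro i _
    rw [show 1+i = i+1 by ring, Nat.choose_succ_succ]
    push_cast
    ring
  rw [Finset.sum_congr rfl hsplit, Finset.sum_add_distrib]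
  have hrest : ∑ i ∈ Finset.range (k+1), (-((-1:ℝ)^i * (k.choose i) * Real.logb 2 (↑(1+i))))
      = -(Ffun k 1 / Real.log 2) := by
    rw [Ffun, Finset.sum_div, ← Finset.sum_neg_distrib]
    apply Finset.sum_congr rfl
    intro i _
    rw [Real.logb]
    push_cast
    ring
  rw [hrest]
  have h2 : Ffun k 1 / Real.log 2 < 0 := div_neg_of_neg_of_pos hF hlog
  linarith
end

section
/- For all ρ > 0 and x > 0, the inequality x < (2^{R}−1)/(ρ(1 − 2^{R}·(√(1+ρx)−1)/(ρx))) (assuming the denominator is positive) implies x < (2^{2R}−1)/ρ, for any R > 0. -/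
open Real

/-- Hidden constraint: for `ρ, x, R > 0`, if the denominator
`1 - 2^R (√(1+ρx)-1)/(ρx)` is positive and
`x < (2^R - 1)/(ρ(1 - 2^R (√(1+ρx)-1)/(ρx)))`, then `x < (2^{2R} - 1)/ρ`. -/
theorem hidden_constraint_fixed (ρ x R : ℝ) (hρ : 0 < ρ) (hx : 0 < x) (hR : 0 < R)
    (hden : 0 < 1 - (2 : ℝ) ^ R * ((Real.sqrt (1 + ρ * x) - 1) / (ρ * x)))
    (hlt : x < ((2 : ℝ) ^ R - 1)
      / (ρ * (1 - (2 : ℝ) ^ R * ((Real.sqrt (1 + ρ * x) - 1) / (ρ * x))))) :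
    x < ((2 : ℝ) ^ (2 * R) - 1) / ρ := by
  set s := Real.sqrt (1 + ρ * x) with hs
  have hrx : 0 < ρ * x := mul_pos hρ hx
  have h1 : (0:ℝ) ≤ 1 + ρ * x := by positivity
  have hs2 : s ^ 2 = 1 + ρ * x := Real.sq_sqrt h1
  have hs1 : 1 < s := by
    rw [show (1:ℝ) = Real.sqrt 1 by simp [hs]]
    exact Real.sqrt_lt_sqrt (by norm_num) (by linarith)
  have ha : 1 < (2:ℝ) ^ R :=
    (Real.one_lt_rpow_iff_of_pos (by norm_num : (0:ℝ) < 2)).mpr (Or.inl ⟨by norm_num, hR⟩)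
  have hden' : 0 < ρ * (1 - (2:ℝ) ^ R * ((s - 1) / (ρ * x))) := mul_pos hρ hden
  rw [lt_div_iff₀ hden'] at hlt
  have hsimp : x * (ρ * (1 - (2:ℝ) ^ R * ((s - 1) / (ρ * x))))
      = ρ * x - (2:ℝ) ^ R * (s - 1) := by
    field_simp
  rw [hsimp] at hlt
  -- hlt : ρ * x - 2^R * (s - 1) < 2^R - 1, with ρ*x = s^2 - 1
  have key : s < (2:ℝ) ^ R := by nlinarith
  have h2 : (2:ℝ) ^ (2 * R) = ((2:ℝ) ^ R) ^ 2 := by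
    rw [two_mul, Real.rpow_add (by norm_num)]; ring
  rw [lt_div_iff₀ hρ]
  nlinarith
end

section
/- For positive reals ρ, R with R > 0: if x_k > 0 and x_n ≥ x_k satisfy x_k ≤ x_n < (2^R − 1)/(ρ α²) where α² = (√(1+ρ x_k) − 1)/(ρ x_k), then x_k < (2^{2R} − 1)/ρ. -/
open Real

/-- Hidden constraint (dynamic QoS): if `0 < x_k ≤ x_n < (2^R - 1)/(ρ α²)` with
`α² = (√(1+ρx_k) - 1)/(ρx_k)`, then `x_k < (2^{2R} - 1)/ρ`. -/
theorem hidden_constraint_dynamic (ρ R xk xn : ℝ) (hρ : 0 < ρ) (hR : 0 < R)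
    (hxk : 0 < xk) (hkn : xk ≤ xn)
    (hlt : xn < ((2 : ℝ) ^ R - 1) / (ρ * ((Real.sqrt (1 + ρ * xk) - 1) / (ρ * xk)))) :
    xk < ((2 : ℝ) ^ (2 * R) - 1) / ρ := by
  set s := Real.sqrt (1 + ρ * xk) with hs
  have hpos : (0:ℝ) < 1 + ρ * xk := by positivity
  have hs1 : 1 < s := by
    rw [hs]
    exact (Real.lt_sqrt (by norm_num)).mpr (by nlinarith)
  have hsq : s ^ 2 = 1 + ρ * xk := Real.sq_sqrt hpos.le
  have hb : ρ * ((s - 1) / (ρ * xk)) = (s - 1) / xk := by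
    field_simp
  rw [hb] at hlt
  have hbpos : (0:ℝ) < (s - 1) / xk := div_pos (by linarith) hxk
  have h1 : xn * ((s - 1) / xk) < 2 ^ R - 1 := (lt_div_iff₀ hbpos).mp hlt
  have h2 : xk * ((s - 1) / xk) ≤ xn * ((s - 1) / xk) :=
    mul_le_mul_of_nonneg_right hkn hbpos.le
  have h3 : xk * ((s - 1) / xk) = s - 1 := by field_simp
  have hsR : s < 2 ^ R := by nlinarith
  have h2R : (2:ℝ) ^ (2 * R) = 2 ^ R * 2 ^ R := by
    rw [two_mul, Real.rpow_add (by norm_num)]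
  rw [lt_div_iff₀ hρ]
  have hspos : 0 < s := lt_trans one_pos hs1
  nlinarith [sq_nonneg (s - 2 ^ R)]
end
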